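/- Fix positive integers k and i. Consider the random bipartite graph on vertex set M ∪ W with |M| = |W| = n, where each man m ∈ M is independently assigned a uniformly random k-element subset of W, and the edges of the graph join each man to the k women in his subset. Then for all sufficiently large n, for every vertex v, the probability that the number of vertices at graph distance at most i from v exceeds (16k)^i · log₂ n is at most i/n³. -/

import Mathlib

/-- The bipartite graph on `Fin n ⊕ Fin n` (men ⊕ women) in which man `a` is
adjacent to woman `b` iff `b ∈ f a`. -/
def bipGraph (n : ℕ) (f : Fin n → Finset (Fin n)) : SimpleGraph (Fin n ⊕ Fin n) where
  Adj u v :=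
    (∃ a b, u = Sum.inl a ∧ v = Sum.inr b ∧ b ∈ f a) ∨
    (∃ a b, u = Sum.inr b ∧ v = Sum.inl a ∧ b ∈ f a)
  symm := by
    constructor
    intro u v h
    rcases h with ⟨a, b, h1, h2, h3⟩ | ⟨a, b, h1, h2, h3⟩
    · exact Or.inr ⟨a, b, h2, h1, h3⟩
    · exact Or.inl ⟨a, b, h2, h1, h3⟩
  loopless := by
    constructor
    intro u h
    rcases h with ⟨a, b, h1, h2, _⟩ | ⟨a, b, h1, h2, _⟩ <;> subst h1 <;> simp_all

open Finset SimpleGraph Sum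

section GraphHelpers

variable {V : Type*} {G : SimpleGraph V}

lemma NB.dist_concat_le {v x u : V} (hr : G.Reachable v x) (ha : G.Adj x u) :
    G.dist v u ≤ G.dist v x + 1 := by
  obtain ⟨p, hp⟩ := hr.exists_walk_length_eq_dist
  have := SimpleGraph.dist_le (p.concat ha)
  rwa [SimpleGraph.Walk.length_concat, hp] at this

lemma NB.exists_adj_dist {v u : V} {m : ℕ} (hr : G.Reachable v u) (hd : G.dist v u = m + 1) :
    ∃ x, G.Adj x u ∧ G.Reachable v x ∧ G.dist v x = m := by
  obtain ⟨p, hp⟩ := hr.exists_walk_length_eq_dist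
  rw [hd] at hp
  have hrevlen : p.reverse.length = m + 1 := by rw [SimpleGraph.Walk.length_reverse, hp]
  cases hq : p.reverse with
  | nil => rw [hq] at hrevlen; simp at hrevlen
  | cons h q =>
    rename_i x
    rw [hq] at hrevlen
    simp only [SimpleGraph.Walk.length_cons] at hrevlen
    have hqlen : q.length = m := by omega
    have hreach : G.Reachable v x := ⟨q.reverse⟩
    have h1 : G.dist v x ≤ m := by
      have := SimpleGraph.dist_le q.reverse
      rwa [SimpleGraph.Walk.length_reverse, hqlen] at this
    have h2 : G.dist v u ≤ G.dist v x + 1 := NB.dist_concat_le hreach h.symm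
    exact ⟨x, h.symm, hreach, by omega⟩

lemma NB.reach_dist_mono {G G' : SimpleGraph V} (hle : G ≤ G') {v u : V}
    (h : G.Reachable v u) : G'.Reachable v u ∧ G'.dist v u ≤ G.dist v u := by
  obtain ⟨p, hp⟩ := h.exists_walk_length_eq_dist
  refine ⟨⟨p.mapLe hle⟩, ?_⟩
  have := SimpleGraph.dist_le (p.mapLe hle)
  rwa [SimpleGraph.Walk.mapLe, SimpleGraph.Walk.length_map, hp] at this

end GraphHelpers

section Bip

variable {n : ℕ}

lemma NB.bipGraph_le {g g' : Fin n → Finset (Fin n)} (h : ∀ a, g a ⊆ g' a) :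
    bipGraph n g ≤ bipGraph n g' := by
  intro u w hadj
  rcases hadj with ⟨a, b, h1, h2, h3⟩ | ⟨a, b, h1, h2, h3⟩
  · exact Or.inl ⟨a, b, h1, h2, h a h3⟩
  · exact Or.inr ⟨a, b, h1, h2, h a h3⟩

/-- key lemma: distances survive deleting the men of `A`, as long as the distance is
smaller than the distance of every man of `A`. -/
lemma NB.avoid_dist {g : Fin n → Finset (Fin n)} {A : Finset (Fin n)} {v : Fin n ⊕ Fin n} {m : ℕ}
    (hA : ∀ a ∈ A, ¬((bipGraph n g).Reachable v (inl a) ∧ (bipGraph n g).dist v (inl a) ≤ m)) :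
    ∀ r, r ≤ m → ∀ u, (bipGraph n g).Reachable v u → (bipGraph n g).dist v u = r →
      (∀ a ∈ A, u ≠ inl a) →
      (bipGraph n (fun a => if a ∈ A then ∅ else g a)).Reachable v u ∧
        (bipGraph n (fun a => if a ∈ A then ∅ else g a)).dist v u ≤ r := by
  intro r
  induction r with
  | zero =>
    intro _ u hr hd _
    have hvu : v = u := (hr.dist_eq_zero_iff).mp hd
    subst hvu
    exact ⟨SimpleGraph.Reachable.refl v, by simp [SimpleGraph.dist_self]⟩
  | succ r ih =>
    intro hrm u hr hd hu
    obtain ⟨x, hadj, hxr, hxd⟩ := NB.exists_adj_dist hr hd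
    have hx : ∀ a ∈ A, x ≠ inl a := by
      intro a ha hxa
      exact hA a ha ⟨hxa ▸ hxr, by rw [← hxa]; omega⟩
    obtain ⟨hAr, hAd⟩ := ih (by omega) x hxr hxd hx
    have hadj' : (bipGraph n (fun a => if a ∈ A then ∅ else g a)).Adj x u := by
      rcases hadj with ⟨a, b, h1, h2, h3⟩ | ⟨a, b, h1, h2, h3⟩
      · have haA : a ∉ A := fun hmem => (hx a hmem) h1
        exact Or.inl ⟨a, b, h1, h2, by simp [haA, h3]⟩
      · have haA : a ∉ A := fun hmem => (hu a hmem) h2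
        exact Or.inr ⟨a, b, h1, h2, by simp [haA, h3]⟩
    exact ⟨hAr.trans hadj'.reachable,
      le_trans (NB.dist_concat_le hAr hadj') (by omega)⟩

lemma NB.avoid_main {g : Fin n → Finset (Fin n)} {A : Finset (Fin n)} {v : Fin n ⊕ Fin n} {m : ℕ}
    (hA : ∀ a ∈ A, (bipGraph n g).Reachable v (inl a) ∧ (bipGraph n g).dist v (inl a) = m + 1)
    {a₀ : Fin n} (ha₀ : a₀ ∈ A) :
    ∃ b ∈ g a₀, (bipGraph n (fun a => if a ∈ A then ∅ else g a)).Reachable v (inr b) ∧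
      (bipGraph n (fun a => if a ∈ A then ∅ else g a)).dist v (inr b) ≤ m := by
  obtain ⟨hr, hd⟩ := hA a₀ ha₀
  obtain ⟨x, hadj, hxr, hxd⟩ := NB.exists_adj_dist hr hd
  have hA' : ∀ a ∈ A, ¬((bipGraph n g).Reachable v (inl a) ∧
      (bipGraph n g).dist v (inl a) ≤ m) := by
    intro a ha ⟨_, hle⟩
    have := (hA a ha).2
    omega
  rcases hadj with ⟨a, b, h1, h2, h3⟩ | ⟨a, b, h1, h2, h3⟩
  · exact absurd h2 (by simp)
  · -- x = inr b, inl a₀ = inl a, b ∈ g a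
    have haa : a = a₀ := by
      have := h2.symm
      injection this
    subst haa
    subst h1
    have hx : ∀ a' ∈ A, (inr b : Fin n ⊕ Fin n) ≠ inl a' := by intro a' _ h; simp at h
    obtain ⟨h4, h5⟩ := NB.avoid_dist hA' m le_rfl (inr b) hxr hxd hx
    exact ⟨b, h3, h4, h5⟩

end Bip

open scoped Classical in
/-- number of women within distance `j` of `v`. -/
noncomputable def NB.wcard (n : ℕ) (G : SimpleGraph (Fin n ⊕ Fin n)) (v : Fin n ⊕ Fin n)
    (j : ℕ) : ℕ :=
  (Finset.univ.filter (fun b : Fin n => G.Reachable v (Sum.inr b) ∧ G.dist v (Sum.inr b) ≤ j)).card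

open scoped Classical in
/-- number of men within distance `j` of `v`. -/
noncomputable def NB.mcard (n : ℕ) (G : SimpleGraph (Fin n ⊕ Fin n)) (v : Fin n ⊕ Fin n)
    (j : ℕ) : ℕ :=
  (Finset.univ.filter (fun a : Fin n => G.Reachable v (Sum.inl a) ∧ G.dist v (Sum.inl a) ≤ j)).card

open scoped Classical in
/-- number of men at distance exactly `j` from `v`. -/
noncomputable def NB.xcard (n : ℕ) (G : SimpleGraph (Fin n ⊕ Fin n)) (v : Fin n ⊕ Fin n)
    (j : ℕ) : ℕ :=
  (Finset.univ.filter (fun a : Fin n => G.Reachable v (Sum.inl a) ∧ G.dist v (Sum.inl a) = j)).card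

section Det

open scoped Classical

variable {n k : ℕ}

lemma NB.base_bound (g : Fin n → Finset (Fin n)) (v : Fin n ⊕ Fin n) :
    NB.wcard n (bipGraph n g) v 0 + NB.mcard n (bipGraph n g) v 0 ≤ 1 := by
  set G := bipGraph n g
  have hkey : ∀ u : Fin n ⊕ Fin n, G.Reachable v u → G.dist v u ≤ 0 → v = u := by
    intro u hr hd
    exact hr.dist_eq_zero_iff.mp (by omega)
  cases v with
  | inl a₀ =>
    have hw : NB.wcard n G (inl a₀) 0 = 0 := by
      rw [NB.wcard, Finset.card_eq_zero, Finset.filter_eq_empty_iff]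
      intro b _ ⟨hr, hd⟩
      exact absurd (hkey _ hr hd) (by simp)
    have hm : NB.mcard n G (inl a₀) 0 ≤ 1 := by
      rw [NB.mcard]
      apply Finset.card_le_one.mpr
      intro a ha a' ha'
      simp only [Finset.mem_filter] at ha ha'
      have h1 := hkey _ ha.2.1 ha.2.2
      have h2 := hkey _ ha'.2.1 ha'.2.2
      rw [h1] at h2
      injection h2
    omega
  | inr b₀ =>
    have hw : NB.wcard n G (inr b₀) 0 ≤ 1 := by
      rw [NB.wcard]
      apply Finset.card_le_one.mpr
      intro a ha a' ha'
      simp only [Finset.mem_filter] at ha ha'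
      have h1 := hkey _ ha.2.1 ha.2.2
      have h2 := hkey _ ha'.2.1 ha'.2.2
      rw [h1] at h2
      injection h2
    have hm : NB.mcard n G (inr b₀) 0 = 0 := by
      rw [NB.mcard, Finset.card_eq_zero, Finset.filter_eq_empty_iff]
      intro a _ ⟨hr, hd⟩
      exact absurd (hkey _ hr hd) (by simp)
    omega

lemma NB.wcard_succ_le {g : Fin n → Finset (Fin n)} (hg : ∀ a, (g a).card ≤ k)
    (v : Fin n ⊕ Fin n) (j : ℕ) :
    NB.wcard n (bipGraph n g) v (j + 1) ≤ 1 + k * NB.mcard n (bipGraph n g) v j := by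
  set G := bipGraph n g with hG
  set M : Finset (Fin n) :=
    Finset.univ.filter (fun a : Fin n => G.Reachable v (inl a) ∧ G.dist v (inl a) ≤ j) with hM
  have hsub : Finset.univ.filter
      (fun b : Fin n => G.Reachable v (Sum.inr b) ∧ G.dist v (Sum.inr b) ≤ j + 1) ⊆
      (Finset.univ.filter (fun b : Fin n => (Sum.inr b : Fin n ⊕ Fin n) = v)) ∪ M.biUnion g := by
    intro b hb
    simp only [Finset.mem_filter, Finset.mem_univ, true_and] at hb
    obtain ⟨hr, hd⟩ := hb
    rcases Nat.eq_zero_or_pos (G.dist v (inr b)) with h0 | hpos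
    · have : v = inr b := hr.dist_eq_zero_iff.mp h0
      apply Finset.mem_union_left
      simp [this.symm]
    · obtain ⟨m, hm⟩ : ∃ m, G.dist v (inr b) = m + 1 := ⟨G.dist v (inr b) - 1, by omega⟩
      obtain ⟨x, hadj, hxr, hxd⟩ := NB.exists_adj_dist hr hm
      rcases hadj with ⟨a, b', h1, h2, h3⟩ | ⟨a, b', h1, h2, h3⟩
      · have hbb : b' = b := by injection h2.symm
        subst hbb h1
        apply Finset.mem_union_right
        apply Finset.mem_biUnion.mpr
        refine ⟨a, ?_, h3⟩
        simp only [hM, Finset.mem_filter, Finset.mem_univ, true_and]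
        exact ⟨hxr, by omega⟩
      · exact absurd h2 (by simp)
  calc NB.wcard n G v (j + 1)
      ≤ ((Finset.univ.filter (fun b : Fin n => (Sum.inr b : Fin n ⊕ Fin n) = v)) ∪
          M.biUnion g).card := Finset.card_le_card hsub
    _ ≤ (Finset.univ.filter (fun b : Fin n => (Sum.inr b : Fin n ⊕ Fin n) = v)).card +
          (M.biUnion g).card := Finset.card_union_le _ _
    _ ≤ 1 + k * NB.mcard n G v j := by
        gcongr
        · apply Finset.card_le_one.mpr
          intro a ha a' ha'
          simp only [Finset.mem_filter] at ha ha'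
          have := ha.2.trans ha'.2.symm
          injection this
        · calc (M.biUnion g).card ≤ ∑ a ∈ M, (g a).card := Finset.card_biUnion_le
            _ ≤ ∑ _a ∈ M, k := Finset.sum_le_sum (fun a _ => hg a)
            _ = M.card * k := by rw [Finset.sum_const, smul_eq_mul]
            _ = k * NB.mcard n G v j := by rw [NB.mcard, mul_comm]

lemma NB.mcard_succ_le (g : Fin n → Finset (Fin n)) (v : Fin n ⊕ Fin n) (j : ℕ) :
    NB.mcard n (bipGraph n g) v (j + 1) ≤
      NB.mcard n (bipGraph n g) v j + NB.xcard n (bipGraph n g) v (j + 1) := by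
  set G := bipGraph n g
  rw [NB.mcard, NB.mcard, NB.xcard]
  refine le_trans (Finset.card_le_card ?_) (Finset.card_union_le _ _)
  intro a ha
  simp only [Finset.mem_filter, Finset.mem_univ, true_and, Finset.mem_union] at ha ⊢
  obtain ⟨hr, hd⟩ := ha
  rcases Nat.lt_or_ge (G.dist v (inl a)) (j + 1) with h | h
  · exact Or.inl ⟨hr, by omega⟩
  · exact Or.inr ⟨hr, by omega⟩

lemma NB.ball_card_le (g : Fin n → Finset (Fin n)) (v : Fin n ⊕ Fin n) (j : ℕ) :
    (Finset.univ.filter (fun u : Fin n ⊕ Fin n =>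
        (bipGraph n g).Reachable v u ∧ (bipGraph n g).dist v u ≤ j)).card ≤
      NB.wcard n (bipGraph n g) v j + NB.mcard n (bipGraph n g) v j := by
  set G := bipGraph n g
  rw [NB.wcard, NB.mcard]
  have hsub : Finset.univ.filter (fun u : Fin n ⊕ Fin n =>
      G.Reachable v u ∧ G.dist v u ≤ j) ⊆
      ((Finset.univ.filter (fun b : Fin n => G.Reachable v (Sum.inr b) ∧
          G.dist v (Sum.inr b) ≤ j)).image Sum.inr) ∪
      ((Finset.univ.filter (fun a : Fin n => G.Reachable v (Sum.inl a) ∧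
          G.dist v (Sum.inl a) ≤ j)).image Sum.inl) := by
    intro u hu
    simp only [Finset.mem_filter, Finset.mem_univ, true_and] at hu
    cases u with
    | inl a =>
      apply Finset.mem_union_right
      simp only [Finset.mem_image, Finset.mem_filter, Finset.mem_univ, true_and]
      exact ⟨a, hu, rfl⟩
    | inr b =>
      apply Finset.mem_union_left
      simp only [Finset.mem_image, Finset.mem_filter, Finset.mem_univ, true_and]
      exact ⟨b, hu, rfl⟩
  refine le_trans (Finset.card_le_card hsub) (le_trans (Finset.card_union_le _ _) ?_)
  gcongr <;> apply Finset.card_image_le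

end Det
section Count

open scoped Classical

variable {n k : ℕ}

/-- Counting bound: the number of `f`'s for which the women-ball of radius `j` has
size at most `s` while at least `t` men are at distance exactly `j+1`. -/
lemma NB.bad_count (hk : 0 < k) (hkn : k ≤ n) (v : Fin n ⊕ Fin n) (j s t : ℕ) :
    (Finset.univ.filter (fun f : Fin n → {S : Finset (Fin n) // S.card = k} =>
        NB.wcard n (bipGraph n (fun a => (f a).1)) v j ≤ s ∧
        t ≤ NB.xcard n (bipGraph n (fun a => (f a).1)) v (j + 1))).card ≤
      n.choose t * ((n.choose k) ^ (n - t) * (s * (n - 1).choose (k - 1)) ^ t) := by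
  set K := {S : Finset (Fin n) // S.card = k} with hK
  -- a default element of K
  obtain ⟨S₀, -, hS₀⟩ := Finset.exists_subset_card_eq
    (show k ≤ (Finset.univ : Finset (Fin n)).card by simpa using hkn)
  let x₀ : K := ⟨S₀, hS₀⟩
  -- notation for the graph with the men of A deleted
  let gA : Finset (Fin n) → (Fin n → K) → (Fin n → Finset (Fin n)) :=
    fun A f a => if a ∈ A then ∅ else (f a).1
  have hGAcongr : ∀ (A : Finset (Fin n)) (f g' : Fin n → K),
      (∀ a, a ∉ A → f a = g' a) → gA A f = gA A g' := by
    intro A f g' hfg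
    funext a
    by_cases ha : a ∈ A
    · simp [gA, ha]
    · simp [gA, ha, hfg a ha]
  -- counting k-sets containing a fixed woman
  have hone : ∀ b : Fin n, (Finset.univ.filter (fun x : K => b ∈ x.1)).card ≤
      (n - 1).choose (k - 1) := by
    intro b
    have := Finset.card_le_card_of_injOn (s := Finset.univ.filter (fun x : K => b ∈ x.1))
      (f := fun x : K => x.1.erase b)
      (t := Finset.powersetCard (k - 1) (Finset.univ.erase b)) ?_ ?_
    · refine le_trans this ?_
      rw [Finset.card_powersetCard, Finset.card_erase_of_mem (Finset.mem_univ b)]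
      simp
    · intro x hx
      simp only [Finset.mem_coe, Finset.mem_filter] at hx ⊢
      rw [Finset.mem_powersetCard]
      refine ⟨Finset.erase_subset_erase b (Finset.subset_univ _), ?_⟩
      rw [Finset.card_erase_of_mem hx.2, x.2]
    · intro x hx y hy hxy
      simp only [Finset.mem_coe, Finset.mem_filter] at hx hy
      apply Subtype.ext
      rw [← Finset.insert_erase hx.2, ← Finset.insert_erase hy.2]
      exact congrArg (insert b) hxy
  -- the event for a fixed set A of t men
  let EA : Finset (Fin n) → Finset (Fin n → K) := fun A =>
    Finset.univ.filter (fun f => NB.wcard n (bipGraph n (gA A f)) v j ≤ s ∧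
      ∀ a ∈ A, ∃ b ∈ (f a).1, (bipGraph n (gA A f)).Reachable v (Sum.inr b) ∧
        (bipGraph n (gA A f)).dist v (Sum.inr b) ≤ j)
  -- step 1: inclusion into the union of the EA
  have hsub : (Finset.univ.filter (fun f : Fin n → K =>
      NB.wcard n (bipGraph n (fun a => (f a).1)) v j ≤ s ∧
      t ≤ NB.xcard n (bipGraph n (fun a => (f a).1)) v (j + 1))) ⊆
      (Finset.powersetCard t (Finset.univ : Finset (Fin n))).biUnion EA := by
    intro f hf
    simp only [Finset.mem_filter, Finset.mem_univ, true_and] at hf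
    obtain ⟨hw, hx⟩ := hf
    rw [NB.xcard] at hx
    obtain ⟨A, hAsub, hAcard⟩ := Finset.exists_subset_card_eq hx
    rw [Finset.mem_biUnion]
    refine ⟨A, by rw [Finset.mem_powersetCard_univ]; exact hAcard, ?_⟩
    have hAle : bipGraph n (gA A f) ≤ bipGraph n (fun a => (f a).1) := by
      apply NB.bipGraph_le
      intro a b hb
      simp only [gA] at hb
      split at hb
      · simp at hb
      · exact hb
    have hA : ∀ a ∈ A, (bipGraph n (fun a' => (f a').1)).Reachable v (Sum.inl a) ∧
        (bipGraph n (fun a' => (f a').1)).dist v (Sum.inl a) = j + 1 := by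
      intro a ha
      have := hAsub ha
      simp only [Finset.mem_filter, Finset.mem_univ, true_and] at this
      exact this
    simp only [EA, Finset.mem_filter, Finset.mem_univ, true_and]
    constructor
    · -- wcard of the smaller graph is at most wcard of the big graph
      refine le_trans (Finset.card_le_card ?_) hw
      intro b hb
      simp only [Finset.mem_filter, Finset.mem_univ, true_and] at hb ⊢
      obtain ⟨hr, hd⟩ := hb
      obtain ⟨hr', hd'⟩ := NB.reach_dist_mono hAle hr
      exact ⟨hr', le_trans hd' hd⟩
    · intro a ha
      exact NB.avoid_main hA ha
  refine le_trans (Finset.card_le_card hsub) (le_trans (Finset.card_biUnion_le) ?_)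
  have hcardA : ∀ A ∈ Finset.powersetCard t (Finset.univ : Finset (Fin n)),
      (EA A).card ≤ (n.choose k) ^ (n - t) * (s * (n - 1).choose (k - 1)) ^ t := by
    intro A hA
    rw [Finset.mem_powersetCard_univ] at hA
    -- fiberwise counting over the restriction to the complement of A
    let ρ : (Fin n → K) → (Fin n → K) := fun f a => if a ∈ A then x₀ else f a
    have hρ : ∀ f : Fin n → K, gA A (ρ f) = gA A f :=
      fun f => hGAcongr A (ρ f) f (fun a ha => by simp [ρ, ha])
    let T : Finset (Fin n → K) := Finset.univ.filter (fun g' => (∀ a ∈ A, g' a = x₀) ∧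
      NB.wcard n (bipGraph n (gA A g')) v j ≤ s)
    have hmap : ∀ f ∈ EA A, ρ f ∈ T := by
      intro f hf
      simp only [EA, Finset.mem_filter, Finset.mem_univ, true_and] at hf
      simp only [T, Finset.mem_filter, Finset.mem_univ, true_and]
      refine ⟨fun a ha => by simp [ρ, ha], ?_⟩
      rw [hρ f]
      exact hf.1
    rw [Finset.card_eq_sum_card_fiberwise hmap]
    have hfiber : ∀ g' ∈ T, ((EA A).filter (fun f => ρ f = g')).card ≤
        (s * (n - 1).choose (k - 1)) ^ t := by
      intro g' hg'
      simp only [T, Finset.mem_filter, Finset.mem_univ, true_and] at hg'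
      let Tset : Finset K := Finset.univ.filter (fun x : K => ∃ b ∈ x.1,
        (bipGraph n (gA A g')).Reachable v (Sum.inr b) ∧
        (bipGraph n (gA A g')).dist v (Sum.inr b) ≤ j)
      have hTset : Tset.card ≤ s * (n - 1).choose (k - 1) := by
        have hsubT : Tset ⊆ (Finset.univ.filter (fun b : Fin n =>
            (bipGraph n (gA A g')).Reachable v (Sum.inr b) ∧
            (bipGraph n (gA A g')).dist v (Sum.inr b) ≤ j)).biUnion
            (fun b => Finset.univ.filter (fun x : K => b ∈ x.1)) := by
          intro x hx
          simp only [Tset, Finset.mem_filter, Finset.mem_univ, true_and] at hx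
          obtain ⟨b, hb, hbr⟩ := hx
          rw [Finset.mem_biUnion]
          exact ⟨b, by simp [hbr], by simp [hb]⟩
        refine le_trans (Finset.card_le_card hsubT) (le_trans Finset.card_biUnion_le ?_)
        calc ∑ b ∈ (Finset.univ.filter (fun b : Fin n =>
              (bipGraph n (gA A g')).Reachable v (Sum.inr b) ∧
              (bipGraph n (gA A g')).dist v (Sum.inr b) ≤ j)),
              (Finset.univ.filter (fun x : K => b ∈ x.1)).card
            ≤ ∑ _b ∈ (Finset.univ.filter (fun b : Fin n =>
              (bipGraph n (gA A g')).Reachable v (Sum.inr b) ∧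
              (bipGraph n (gA A g')).dist v (Sum.inr b) ≤ j)), (n - 1).choose (k - 1) :=
              Finset.sum_le_sum (fun b _ => hone b)
          _ = NB.wcard n (bipGraph n (gA A g')) v j * (n - 1).choose (k - 1) := by
              rw [Finset.sum_const, smul_eq_mul, NB.wcard]
          _ ≤ s * (n - 1).choose (k - 1) := by
              exact Nat.mul_le_mul_right _ hg'.2
      have hsubfib : (EA A).filter (fun f => ρ f = g') ⊆
          Fintype.piFinset (fun a => if a ∈ A then Tset else {g' a}) := by
        intro f hf
        simp only [Finset.mem_filter] at hf
        obtain ⟨hfEA, hfρ⟩ := hf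
        simp only [EA, Finset.mem_filter, Finset.mem_univ, true_and] at hfEA
        have hagree : gA A f = gA A g' := by
          apply hGAcongr
          intro a ha
          rw [← hfρ]
          simp [ρ, ha]
        rw [Fintype.mem_piFinset]
        intro a
        by_cases ha : a ∈ A
        · simp only [ha, if_true]
          obtain ⟨b, hb1, hb2⟩ := hfEA.2 a ha
          rw [hagree] at hb2
          simp only [Tset, Finset.mem_filter, Finset.mem_univ, true_and]
          exact ⟨b, hb1, hb2⟩
        · simp only [ha, if_false, Finset.mem_singleton]
          rw [← hfρ]
          simp [ρ, ha]
      refine le_trans (Finset.card_le_card hsubfib) ?_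
      rw [Fintype.card_piFinset]
      calc (∏ a : Fin n, (if a ∈ A then Tset else {g' a}).card)
          = ∏ a : Fin n, (if a ∈ A then Tset.card else 1) := by
            apply Finset.prod_congr rfl
            intro a _
            by_cases ha : a ∈ A <;> simp [ha]
        _ = (∏ a ∈ A, (if a ∈ A then Tset.card else 1)) *
              ∏ a ∈ Aᶜ, (if a ∈ A then Tset.card else 1) :=
            (Finset.prod_mul_prod_compl A _).symm
        _ = Tset.card ^ t := by
            rw [Finset.prod_congr rfl (fun a ha => if_pos ha),
              Finset.prod_congr rfl (fun a ha => if_neg (Finset.mem_compl.mp ha)),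
              Finset.prod_const, Finset.prod_const_one, mul_one, hA]
        _ ≤ (s * (n - 1).choose (k - 1)) ^ t := Nat.pow_le_pow_left hTset t
    have hTcard : T.card ≤ (n.choose k) ^ (n - t) := by
      have hsubT : T ⊆ Fintype.piFinset (fun a =>
          if a ∈ A then ({x₀} : Finset K) else Finset.univ) := by
        intro g' hg'
        simp only [T, Finset.mem_filter, Finset.mem_univ, true_and] at hg'
        rw [Fintype.mem_piFinset]
        intro a
        by_cases ha : a ∈ A
        · simp only [ha, if_true, Finset.mem_singleton]
          exact hg'.1 a ha
        · simp [ha]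
      refine le_trans (Finset.card_le_card hsubT) (le_of_eq ?_)
      rw [Fintype.card_piFinset]
      calc (∏ a : Fin n, (if a ∈ A then ({x₀} : Finset K) else Finset.univ).card)
          = ∏ a : Fin n, (if a ∈ A then 1 else Fintype.card K) := by
            apply Finset.prod_congr rfl
            intro a _
            by_cases ha : a ∈ A <;> simp [ha]
        _ = (∏ a ∈ A, (if a ∈ A then 1 else Fintype.card K)) *
              ∏ a ∈ Aᶜ, (if a ∈ A then 1 else Fintype.card K) :=
            (Finset.prod_mul_prod_compl A _).symm
        _ = (Fintype.card K) ^ (n - t) := by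
            rw [Finset.prod_congr rfl (fun a ha => if_pos ha),
              Finset.prod_congr rfl (fun a (ha : a ∈ Aᶜ) => if_neg (Finset.mem_compl.mp ha)),
              Finset.prod_const, Finset.prod_const, one_pow, one_mul,
              Finset.card_compl, hA, Fintype.card_fin]
        _ = (n.choose k) ^ (n - t) := by
            have hcardK : Fintype.card K = n.choose k := by
              show Fintype.card {S : Finset (Fin n) // Finset.card S = k} = n.choose k
              rw [Fintype.card_finset_len, Fintype.card_fin]
            rw [hcardK]
    calc (∑ g' ∈ T, ((EA A).filter (fun f => ρ f = g')).card)
        ≤ ∑ _g' ∈ T, (s * (n - 1).choose (k - 1)) ^ t := Finset.sum_le_sum hfiber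
      _ = T.card * (s * (n - 1).choose (k - 1)) ^ t := by rw [Finset.sum_const, smul_eq_mul]
      _ ≤ (n.choose k) ^ (n - t) * (s * (n - 1).choose (k - 1)) ^ t :=
          Nat.mul_le_mul_right _ hTcard
  calc (∑ A ∈ Finset.powersetCard t (Finset.univ : Finset (Fin n)), (EA A).card)
      ≤ ∑ _A ∈ Finset.powersetCard t (Finset.univ : Finset (Fin n)),
          (n.choose k) ^ (n - t) * (s * (n - 1).choose (k - 1)) ^ t :=
        Finset.sum_le_sum hcardA
    _ = n.choose t * ((n.choose k) ^ (n - t) * (s * (n - 1).choose (k - 1)) ^ t) := by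
        rw [Finset.sum_const, smul_eq_mul, Finset.card_powersetCard, Finset.card_univ,
          Fintype.card_fin]

end Count

section Arith

lemma NB.pow_self_le_four_pow_mul_factorial : ∀ t : ℕ, (t : ℝ) ^ t ≤ 4 ^ t * (t.factorial : ℝ)
  | 0 => by norm_num
  | (t + 1) => by
    have ih := NB.pow_self_le_four_pow_mul_factorial t
    have key : ((t : ℝ) + 1) ^ t ≤ 4 * (t : ℝ) ^ t := by
      rcases Nat.eq_zero_or_pos t with h0 | hpos
      · subst h0; norm_num
      · have htR : (0:ℝ) < t := by exact_mod_cast hpos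
        have h1 : (t : ℝ) + 1 = (t : ℝ) * (1 + 1 / t) := by field_simp
        have h2 : (1 : ℝ) + 1 / t ≤ Real.exp (1 / t) := by
          have := Real.add_one_le_exp (1 / (t:ℝ))
          linarith
        have h3 : ((t : ℝ) + 1) ^ t ≤ (t : ℝ) ^ t * Real.exp (1 / t) ^ t := by
          rw [h1, mul_pow]
          have hp1 : (0:ℝ) ≤ 1 + 1/(t:ℝ) := by positivity
          have hp2 : ((1:ℝ) + 1/t) ^ t ≤ Real.exp (1/(t:ℝ)) ^ t := pow_le_pow_left₀ hp1 h2 t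
          exact mul_le_mul_of_nonneg_left hp2 (pow_nonneg htR.le t)
        have h4 : Real.exp (1 / (t:ℝ)) ^ t = Real.exp 1 := by
          rw [← Real.exp_nat_mul]
          congr 1
          field_simp
        have h5 : Real.exp 1 ≤ 4 := by
          have := Real.exp_one_lt_d9
          linarith
        calc ((t : ℝ) + 1) ^ t ≤ (t : ℝ) ^ t * Real.exp 1 := by rw [← h4]; exact h3
          _ ≤ 4 * (t:ℝ) ^ t := by nlinarith [pow_nonneg htR.le t]
    calc ((t + 1 : ℕ) : ℝ) ^ (t + 1) = ((t:ℝ) + 1) * ((t:ℝ) + 1) ^ t := by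
          push_cast; ring
      _ ≤ ((t:ℝ) + 1) * (4 * (t:ℝ)^t) :=
          mul_le_mul_of_nonneg_left key (by positivity)
      _ ≤ ((t:ℝ) + 1) * (4 * (4^t * (t.factorial : ℝ))) := by
          refine mul_le_mul_of_nonneg_left ?_ (by positivity)
          linarith [ih]
      _ = 4 ^ (t+1) * (((t+1).factorial : ℕ) : ℝ) := by
          rw [Nat.factorial_succ]
          push_cast
          ring

lemma NB.prob_bound {n k s : ℕ} (hk : 0 < k) (hkn : k ≤ n) (hs : 0 < s) :
    ((n.choose (8*k*s) * ((n.choose k) ^ (n - 8*k*s) *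
        (s * (n - 1).choose (k - 1)) ^ (8*k*s)) : ℕ) : ℝ) / ((n.choose k : ℝ)) ^ n ≤
      (1/2 : ℝ) ^ (8*k*s) := by
  set t := 8*k*s with ht
  have hn : 0 < n := lt_of_lt_of_le hk hkn
  have hCnk : (0:ℝ) < (n.choose k : ℝ) := by exact_mod_cast Nat.choose_pos hkn
  have hDpos : (0:ℝ) < ((n.choose k : ℝ)) ^ n := by positivity
  rcases Nat.lt_or_ge n t with hlt | hge
  · rw [Nat.choose_eq_zero_of_lt hlt]
    simp
  -- key combinatorial identity: n * C(n-1, k-1) = C(n,k) * k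
  have hid : (n : ℝ) * ((n-1).choose (k-1) : ℝ) = (n.choose k : ℝ) * k := by
    have := Nat.add_one_mul_choose_eq (n-1) (k-1)
    have h1 : n - 1 + 1 = n := by omega
    have h2 : k - 1 + 1 = k := by omega
    rw [h1, h2] at this
    exact_mod_cast this
  have hfac : ((2:ℝ) * (k*s)) ^ t ≤ (t.factorial : ℝ) := by
    have hts : (t : ℝ) = 4 * (2 * (k*s)) := by rw [ht]; push_cast; ring
    have h := NB.pow_self_le_four_pow_mul_factorial t
    rw [hts, mul_pow] at h
    have h4 : (0:ℝ) < 4 ^ t := by positivity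
    calc ((2:ℝ) * (k*s)) ^ t = (4^t * ((2:ℝ)*(k*s))^t) / 4^t := by field_simp
      _ ≤ (4^t * (t.factorial:ℝ)) / 4^t := by gcongr
      _ = (t.factorial : ℝ) := by field_simp
  have hfacpos : (0:ℝ) < (t.factorial : ℝ) := by exact_mod_cast t.factorial_pos
  rw [div_le_iff₀ hDpos]
  have hsplit : ((n.choose k : ℝ)) ^ n = ((n.choose k : ℝ)) ^ (n - t) * ((n.choose k : ℝ)) ^ t := by
    rw [← pow_add]
    congr 1
    omega
  push_cast
  rw [hsplit]
  -- reduce to the core inequality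
  have hcore : (n.choose t : ℝ) * ((s:ℝ) * ((n-1).choose (k-1) : ℝ)) ^ t ≤
      (1/2 : ℝ)^t * ((n.choose k : ℝ)) ^ t := by
    have hch : (n.choose t : ℝ) ≤ (n:ℝ)^t / (t.factorial : ℝ) := Nat.choose_le_pow_div t n
    have hnn : (0:ℝ) ≤ ((s:ℝ) * ((n-1).choose (k-1) : ℝ)) ^ t := by positivity
    calc (n.choose t : ℝ) * ((s:ℝ) * ((n-1).choose (k-1) : ℝ)) ^ t
        ≤ ((n:ℝ)^t / (t.factorial : ℝ)) * ((s:ℝ) * ((n-1).choose (k-1) : ℝ)) ^ t :=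
          mul_le_mul_of_nonneg_right hch hnn
      _ = ((n:ℝ) * ((s:ℝ) * ((n-1).choose (k-1) : ℝ))) ^ t / (t.factorial : ℝ) := by
          rw [mul_pow]; ring
      _ = ((s:ℝ) * ((n.choose k : ℝ) * k)) ^ t / (t.factorial : ℝ) := by
          rw [← hid]; ring_nf
      _ = ((s:ℝ)*k)^t * ((n.choose k : ℝ))^t / (t.factorial : ℝ) := by rw [← mul_pow]; ring_nf
      _ ≤ (1/2:ℝ)^t * ((n.choose k : ℝ)) ^ t := by
          rw [div_le_iff₀ hfacpos]
          have hhalf : ((s:ℝ)*k)^t * (2:ℝ)^t ≤ (t.factorial : ℝ) := by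
            calc ((s:ℝ)*k)^t * (2:ℝ)^t = ((2:ℝ) * (k*s))^t := by rw [← mul_pow]; ring_nf
              _ ≤ (t.factorial : ℝ) := hfac
          have h2t : (0:ℝ) < (2:ℝ)^t := by positivity
          have hCt : (0:ℝ) ≤ ((n.choose k : ℝ))^t := by positivity
          have key : ((s:ℝ)*k)^t ≤ (1/2:ℝ)^t * (t.factorial : ℝ) := by
            have e : (1/2:ℝ)^t * (t.factorial:ℝ) = (t.factorial:ℝ)/2^t := by
              rw [div_pow, one_pow]; ring
            rw [e, le_div_iff₀ h2t]
            exact hhalf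
          calc ((s:ℝ)*k)^t * ((n.choose k:ℝ))^t
              ≤ ((1/2:ℝ)^t * (t.factorial:ℝ)) * ((n.choose k:ℝ))^t :=
                mul_le_mul_of_nonneg_right key hCt
            _ = (1/2:ℝ)^t * ((n.choose k:ℝ))^t * (t.factorial:ℝ) := by ring
  calc (n.choose t : ℝ) * ((n.choose k:ℝ)^(n-t) * ((s:ℝ) * ((n-1).choose (k-1):ℝ))^t)
      = (n.choose k:ℝ)^(n-t) * ((n.choose t : ℝ) * ((s:ℝ) * ((n-1).choose (k-1):ℝ))^t) := by ring
    _ ≤ (n.choose k:ℝ)^(n-t) * ((1/2:ℝ)^t * (n.choose k:ℝ)^t) :=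
        mul_le_mul_of_nonneg_left hcore (by positivity)
    _ = (1/2:ℝ)^t * ((n.choose k:ℝ)^(n-t) * (n.choose k:ℝ)^t) := by ring

end Arith


open Classical in
/-- In the random bipartite graph where each of the `n` men independently picks a
uniformly random `k`-element set of the `n` women, for fixed `k, i ≥ 1` and all
sufficiently large `n`, the probability that some fixed vertex `v` has more than
`(16k)^i · log₂ n` vertices within graph distance `i` is at most `i/n³`. -/
theorem neighborhood_size_bound (k i : ℕ) (hk : 0 < k) (hi : 0 < i) :
    ∃ N₀ : ℕ, ∀ n : ℕ, N₀ ≤ n → ∀ v : Fin n ⊕ Fin n,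
      ((Finset.univ.filter (fun f : Fin n → {S : Finset (Fin n) // S.card = k} =>
          ((16 * k : ℝ)) ^ i * Real.logb 2 n <
            ((Finset.univ.filter (fun u : Fin n ⊕ Fin n =>
                (bipGraph n (fun a => (f a).1)).Reachable v u ∧
                (bipGraph n (fun a => (f a).1)).dist v u ≤ i)).card : ℝ))).card : ℝ)
        / (Fintype.card (Fin n → {S : Finset (Fin n) // S.card = k}) : ℝ)
      ≤ (i : ℝ) / (n : ℝ) ^ 3 := by
  refine ⟨k + 4, fun n hn v => ?_⟩
  have hkn : k ≤ n := by omega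
  have hn4 : 4 ≤ n := by omega
  have hn0 : 0 < n := by omega
  set ℓ := Nat.log 2 n with hldef
  have hl1 : 1 ≤ ℓ := Nat.log_pos one_lt_two (by omega)
  set aa : ℕ → ℕ := fun j => (16*k)^j * ℓ with hadef
  have haapos : ∀ j, 0 < aa j := by
    intro j
    have h16 : 0 < (16*k)^j := pow_pos (by omega) j
    simp only [hadef]
    exact Nat.mul_pos h16 (by omega)
  set K := {S : Finset (Fin n) // S.card = k} with hKdef
  let Bad : ℕ → Finset (Fin n → K) := fun j =>
    Finset.univ.filter (fun f => NB.wcard n (bipGraph n (fun a => (f a).1)) v j ≤ aa j ∧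
      8*k*(aa j) ≤ NB.xcard n (bipGraph n (fun a => (f a).1)) v (j+1))
  -- Step 1: the event is contained in the union of the Bad events
  have hincl : (Finset.univ.filter (fun f : Fin n → K =>
      ((16 * k : ℝ)) ^ i * Real.logb 2 n <
        ((Finset.univ.filter (fun u : Fin n ⊕ Fin n =>
            (bipGraph n (fun a => (f a).1)).Reachable v u ∧
            (bipGraph n (fun a => (f a).1)).dist v u ≤ i)).card : ℝ))) ⊆
      (Finset.range i).biUnion Bad := by
    intro f hf
    simp only [Finset.mem_filter, Finset.mem_univ, true_and] at hf
    by_contra hnot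
    rw [Finset.mem_biUnion] at hnot
    push_neg at hnot
    set g : Fin n → Finset (Fin n) := fun a => (f a).1 with hgdef
    have hnot' : ∀ j, j < i → NB.wcard n (bipGraph n g) v j ≤ aa j →
        NB.xcard n (bipGraph n g) v (j+1) < 8*k*(aa j) := by
      intro j hj hwj
      have hmem := hnot j (Finset.mem_range.mpr hj)
      simp only [Bad, Finset.mem_filter, Finset.mem_univ, true_and, not_and, not_le] at hmem
      exact hmem hwj
    have hgcard : ∀ a, (g a).card ≤ k := fun a => le_of_eq (f a).2
    have hinv : ∀ j, j ≤ i →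
        NB.wcard n (bipGraph n g) v j + NB.mcard n (bipGraph n g) v j ≤ aa j := by
      intro j
      induction j with
      | zero =>
        intro _
        have hb := NB.base_bound g v
        have ha0 : aa 0 = ℓ := by simp [hadef]
        omega
      | succ j ih =>
        intro hji
        have hIH := ih (by omega)
        have hw : NB.wcard n (bipGraph n g) v j ≤ aa j := by omega
        have hX : NB.xcard n (bipGraph n g) v (j+1) + 1 ≤ 8*(k*(aa j)) := by
          have h8 := hnot' j (by omega) hw
          have he : 8*k*(aa j) = 8*(k*(aa j)) := by ring
          rw [he] at h8
          omega
        have h1 := NB.wcard_succ_le (k := k) hgcard v j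
        have h2 := NB.mcard_succ_le g v j
        have hm : NB.mcard n (bipGraph n g) v j ≤ aa j := by omega
        have hkm : k * NB.mcard n (bipGraph n g) v j ≤ k * aa j :=
          Nat.mul_le_mul_left k hm
        have haka : aa j ≤ k * aa j := Nat.le_mul_of_pos_left _ hk
        have e2 : aa (j+1) = 16*(k*(aa j)) := by
          simp only [hadef]
          rw [pow_succ]
          ring
        generalize hKA : k * aa j = KA at *
        generalize hKM : k * NB.mcard n (bipGraph n g) v j = KM at *
        omega
    have hball := NB.ball_card_le g v i
    have hfin : (Finset.univ.filter (fun u : Fin n ⊕ Fin n =>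
        (bipGraph n g).Reachable v u ∧ (bipGraph n g).dist v u ≤ i)).card ≤ aa i :=
      le_trans hball (hinv i le_rfl)
    have hlogb : (ℓ : ℝ) ≤ Real.logb 2 n := by
      have h2l : ((2:ℕ)^ℓ : ℝ) ≤ (n:ℝ) := by
        exact_mod_cast Nat.pow_log_le_self 2 (by omega)
      have h3 : Real.logb 2 ((2:ℝ)^ℓ) ≤ Real.logb 2 n := by
        apply Real.logb_le_logb_of_le one_lt_two (by positivity)
        exact_mod_cast h2l
      rwa [Real.logb_pow, Real.logb_self_eq_one (by norm_num), mul_one] at h3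
    have hcmp : ((aa i : ℕ) : ℝ) ≤ ((16 * k : ℝ)) ^ i * Real.logb 2 n := by
      have he : ((aa i : ℕ) : ℝ) = ((16 * k : ℝ))^i * (ℓ : ℝ) := by
        simp only [hadef]
        push_cast
        ring
      rw [he]
      have h16 : (0:ℝ) ≤ ((16 * k : ℝ))^i := by positivity
      exact mul_le_mul_of_nonneg_left hlogb h16
    have hcc : ((Finset.univ.filter (fun u : Fin n ⊕ Fin n =>
        (bipGraph n g).Reachable v u ∧ (bipGraph n g).dist v u ≤ i)).card : ℝ)
        ≤ ((aa i : ℕ) : ℝ) := by exact_mod_cast hfin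
    linarith
  -- Step 2: probability of each Bad event
  have hCnkpos : 0 < n.choose k := Nat.choose_pos hkn
  have hDpos : (0:ℝ) < ((n.choose k : ℝ))^n := by positivity
  have hper : ∀ j, ((Bad j).card : ℝ) / ((n.choose k : ℝ))^n ≤ 1/(n:ℝ)^3 := by
    intro j
    have hexp : 8*ℓ ≤ 8*k*(aa j) := by
      have hge : ℓ ≤ aa j := by
        have h16 : 1 ≤ (16*k)^j := Nat.one_le_pow j (16*k) (by omega)
        calc ℓ = 1 * ℓ := (one_mul ℓ).symm
          _ ≤ (16*k)^j * ℓ := Nat.mul_le_mul_right ℓ h16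
          _ = aa j := rfl
      have hka : ℓ ≤ k * aa j := le_trans hge (Nat.le_mul_of_pos_left _ hk)
      have he : 8*k*(aa j) = 8*(k*(aa j)) := by ring
      rw [he]
      omega
    have step2 : ((1:ℝ)/2)^(8*k*(aa j)) ≤ (1/2:ℝ)^(8*ℓ) :=
      pow_le_pow_of_le_one (by norm_num) (by norm_num) hexp
    have step3 : ((1:ℝ)/2)^(8*ℓ) ≤ (2:ℝ)^8/(n:ℝ)^8 := by
      have hn2l : (n:ℝ) < 2^(ℓ+1) := by
        exact_mod_cast Nat.lt_pow_succ_log_self (by norm_num) n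
      have h8 : (n:ℝ)^8 ≤ (2:ℝ)^(8*ℓ)*2^8 := by
        calc (n:ℝ)^8 ≤ ((2:ℝ)^(ℓ+1))^8 := by
              apply pow_le_pow_left₀ (by positivity) hn2l.le
          _ = (2:ℝ)^(8*ℓ)*2^8 := by
              rw [← pow_mul, ← pow_add]
              congr 1
              omega
      rw [div_pow, one_pow, div_le_div_iff₀ (by positivity) (by positivity)]
      nlinarith [h8]
    have step4 : (2:ℝ)^8/(n:ℝ)^8 ≤ 1/(n:ℝ)^3 := by
      rw [div_le_div_iff₀ (by positivity) (by positivity)]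
      have hnr : (4:ℝ) ≤ (n:ℝ) := by exact_mod_cast hn4
      have h5 : (256:ℝ) ≤ (n:ℝ)^5 := by
        calc (256:ℝ) ≤ (4:ℝ)^5 := by norm_num
          _ ≤ (n:ℝ)^5 := pow_le_pow_left₀ (by norm_num) hnr 5
      calc (2:ℝ)^8 * (n:ℝ)^3 = 256*(n:ℝ)^3 := by norm_num
        _ ≤ (n:ℝ)^5 * (n:ℝ)^3 := mul_le_mul_of_nonneg_right h5 (by positivity)
        _ = 1 * (n:ℝ)^8 := by ring
    have hcount := NB.bad_count (n := n) (k := k) hk hkn v j (aa j) (8*k*(aa j))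
    have hprob := NB.prob_bound (n := n) (k := k) (s := aa j) hk hkn (haapos j)
    have hcount' : ((Bad j).card : ℝ) ≤ ((n.choose (8*k*(aa j)) *
        ((n.choose k) ^ (n - 8*k*(aa j)) *
          ((aa j) * (n-1).choose (k-1)) ^ (8*k*(aa j))) : ℕ) : ℝ) := by
      exact_mod_cast hcount
    have step1 : ((Bad j).card : ℝ) / ((n.choose k : ℝ))^n ≤ (1/2:ℝ)^(8*k*(aa j)) :=
      le_trans ((div_le_div_iff_of_pos_right hDpos).mpr hcount') hprob
    exact le_trans step1 (le_trans step2 (le_trans step3 step4))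
  -- Step 3: put everything together
  have hcardfun : (Fintype.card (Fin n → K) : ℕ) = (n.choose k)^n := by
    rw [Fintype.card_fun, Fintype.card_fin]
    congr 1
    show Fintype.card {S : Finset (Fin n) // Finset.card S = k} = n.choose k
    rw [Fintype.card_finset_len, Fintype.card_fin]
  have hEcard : (Finset.univ.filter (fun f : Fin n → K =>
      ((16 * k : ℝ)) ^ i * Real.logb 2 n <
        ((Finset.univ.filter (fun u : Fin n ⊕ Fin n =>
            (bipGraph n (fun a => (f a).1)).Reachable v u ∧
            (bipGraph n (fun a => (f a).1)).dist v u ≤ i)).card : ℝ))).card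
      ≤ ∑ j ∈ Finset.range i, (Bad j).card :=
    le_trans (Finset.card_le_card hincl) Finset.card_biUnion_le
  have hDfun : ((Fintype.card (Fin n → K) : ℕ) : ℝ) = ((n.choose k : ℝ))^n := by
    rw [hcardfun]
    push_cast
    ring
  rw [hDfun]
  calc ((Finset.univ.filter (fun f : Fin n → K =>
      ((16 * k : ℝ)) ^ i * Real.logb 2 n <
        ((Finset.univ.filter (fun u : Fin n ⊕ Fin n =>
            (bipGraph n (fun a => (f a).1)).Reachable v u ∧
            (bipGraph n (fun a => (f a).1)).dist v u ≤ i)).card : ℝ))).card : ℝ)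
        / ((n.choose k : ℝ))^n
      ≤ ((∑ j ∈ Finset.range i, (Bad j).card : ℕ) : ℝ) / ((n.choose k : ℝ))^n := by
        gcongr
    _ = ∑ j ∈ Finset.range i, (((Bad j).card : ℝ) / ((n.choose k : ℝ))^n) := by
        simp [Nat.cast_sum, Finset.sum_div]
    _ ≤ ∑ _j ∈ Finset.range i, 1/(n:ℝ)^3 :=
        Finset.sum_le_sum (fun j _ => hper j)
    _ = (i : ℝ) / (n:ℝ)^3 := by
        rw [Finset.sum_const, Finset.card_range, nsmul_eq_mul]
        ring
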